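/- Let B be a finite Blaschke product and let z_0 ∈ ℂ be a nonzero critical point of B of multiplicity m with |z_0| ≠ 1. Then 1/conj(z_0) is also a critical point of B of multiplicity m. -/

import Mathlib

open Polynomial Complex Finset

private lemma revAt_eq_self' {N i : ℕ} (h : N < i) : revAt N i = i := by
  rw [← revAtFun_eq]; unfold revAtFun; rw [if_neg (by omega)]

private lemma reflect_reflect' {R : Type*} [Semiring R] (N : ℕ) (f : R[X]) :
    reflect N (reflect N f) = f := by
  ext i; rw [coeff_reflect, coeff_reflect, revAt_invol]

private lemma natDegree_reflect_le' {R : Type*} [Semiring R] {N : ℕ} {f : R[X]}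
    (h : f.natDegree ≤ N) : (reflect N f).natDegree ≤ N := by
  rw [natDegree_le_iff_coeff_eq_zero]
  intro k hk
  rw [coeff_reflect, revAt_eq_self' hk]
  exact coeff_eq_zero_of_natDegree_lt (lt_of_le_of_lt h hk)

private lemma derivative_reflect' (N : ℕ) (P : ℂ[X]) (h : P.natDegree ≤ N + 1) :
    derivative (reflect (N + 1) P) =
      reflect N (C ((N : ℂ) + 1) * P - X * derivative P) := by
  ext k
  rw [coeff_derivative, coeff_reflect, coeff_reflect, coeff_sub, coeff_C_mul]
  by_cases hk : k ≤ N
  · obtain ⟨j, rfl⟩ : ∃ j, N = k + j := ⟨N - k, by omega⟩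
    rw [revAt_le hk, revAt_le (by omega : k + 1 ≤ (k + j) + 1)]
    have h1 : k + j - k = j := by omega
    have h2 : k + j + 1 - (k + 1) = j := by omega
    rw [h1, h2]
    cases j with
    | zero =>
      simp only [mul_coeff_zero, coeff_X_zero, zero_mul, sub_zero]
      push_cast; ring
    | succ i =>
      rw [coeff_X_mul, coeff_derivative]
      push_cast; ring
  · push_neg at hk
    rw [revAt_eq_self' hk, revAt_eq_self' (by omega : N + 1 < k + 1)]
    have hc1 : P.coeff (k + 1) = 0 :=
      coeff_eq_zero_of_natDegree_lt (by omega)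
    rw [hc1, zero_mul]
    rcases Nat.lt_or_ge (N + 1) k with hk2 | hk2
    · have hc2 : P.coeff k = 0 := coeff_eq_zero_of_natDegree_lt (by omega)
      obtain ⟨i, rfl⟩ : ∃ i, k = i + 1 := ⟨k - 1, by omega⟩
      rw [coeff_X_mul, coeff_derivative, hc2]
      ring
    · have hkN : k = N + 1 := by omega
      subst hkN
      rw [coeff_X_mul, coeff_derivative]
      ring

private lemma reflect_pow_X_sub_C (u w : ℂ) (huw : u * w = 1) (m : ℕ) :
    reflect m ((X - C u) ^ m) = (C (-u) * (X - C w)) ^ m := by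
  have base : reflect 1 (X - C u) = C (-u) * (X - C w) := by
    have h1 : C (-u) * C w = (-1 : ℂ[X]) := by
      rw [← C_mul, show -u * w = -(1 : ℂ) by rw [← huw]; ring]; simp
    rw [reflect_sub, reflect_one_X, reflect_C, pow_one, mul_sub, h1, map_neg]
    ring
  induction m with
  | zero => simp
  | succ k ih =>
    have h1 : ((X - C u) ^ k).natDegree ≤ k := by
      apply le_trans natDegree_pow_le
      simp [natDegree_X_sub_C]
    have h2 : (X - C u).natDegree ≤ 1 := by simp [natDegree_X_sub_C]
    rw [pow_succ, reflect_mul _ _ h1 h2, ih, base, pow_succ]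

private lemma rootMultiplicity_reflect' (N : ℕ) (P : ℂ[X]) (hP : P ≠ 0)
    (hd : P.natDegree ≤ N) (w : ℂ) (hw : w ≠ 0) :
    (reflect N P).rootMultiplicity w = P.rootMultiplicity w⁻¹ := by
  set m := P.rootMultiplicity w⁻¹ with hm
  set R := P /ₘ (X - C w⁻¹) ^ m with hR
  have hfac : (X - C w⁻¹) ^ m * R = P := pow_mul_divByMonic_rootMultiplicity_eq P w⁻¹
  have hRe : R.eval w⁻¹ ≠ 0 := eval_divByMonic_pow_rootMultiplicity_ne_zero w⁻¹ hP
  have hR0 : R ≠ 0 := fun h => hRe (by simp [h])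
  have hmon : ((X - C (w⁻¹ : ℂ)) ^ m).Monic := (monic_X_sub_C _).pow m
  have hdpow : ((X - C (w⁻¹ : ℂ)) ^ m).natDegree = m := by
    rw [(monic_X_sub_C (w⁻¹ : ℂ)).natDegree_pow, natDegree_X_sub_C, mul_one]
  have hdP : P.natDegree = m + R.natDegree := by
    rw [← hfac, natDegree_mul hmon.ne_zero hR0, hdpow]
  have hmN : m ≤ N := by omega
  have hdR : R.natDegree ≤ N - m := by omega
  have huw : (w⁻¹ : ℂ) * w = 1 := inv_mul_cancel₀ hw
  have h1 : reflect N P = reflect m ((X - C w⁻¹) ^ m) * reflect (N - m) R := by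
    conv_lhs => rw [← hfac]
    rw [show N = m + (N - m) by omega]
    rw [reflect_mul _ _ (le_of_eq hdpow) hdR, show m + (N - m) - m = N - m by omega]
  have heval : (reflect (N - m) R).eval w ≠ 0 := by
    letI : Invertible (w⁻¹ : ℂ) := invertibleOfNonzero (inv_ne_zero hw)
    have hinv : (⅟ (w⁻¹ : ℂ)) = w := invOf_eq_right_inv huw
    have h2 := eval₂_reflect_mul_pow (RingHom.id ℂ) (w⁻¹) (N - m) R hdR
    rw [hinv] at h2
    simp only [eval₂_eq_eval_map, Polynomial.map_id] at h2
    intro h0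
    rw [h0, zero_mul] at h2
    exact hRe h2.symm
  have hrefl0 : reflect N P ≠ 0 := by
    rw [Ne, reflect_eq_zero_iff]; exact hP
  have key : reflect N P = C ((-w⁻¹) ^ m) * ((X - C w) ^ m * reflect (N - m) R) := by
    rw [h1, reflect_pow_X_sub_C _ _ huw, mul_pow, ← C_pow, mul_assoc]
  rw [key] at hrefl0 ⊢
  have hne2 : (X - C w) ^ m * reflect (N - m) R ≠ 0 := right_ne_zero_of_mul hrefl0
  rw [rootMultiplicity_mul hrefl0, rootMultiplicity_C,
    rootMultiplicity_mul hne2, rootMultiplicity_X_sub_C_pow,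
    rootMultiplicity_eq_zero (by simpa [IsRoot] using heval)]
  omega

theorem blaschke_critical_points_reflection (n : ℕ) (p q W : ℂ[X])
    (hdeg : p.natDegree = n + 1)
    (hq : q = ∑ k ∈ range (n + 2), C ((starRingEnd ℂ) (p.coeff (n + 1 - k))) * X ^ k)
    (hcop : IsCoprime p q)
    (hzeros : ∀ z ∈ p.roots, ‖z‖ < 1)
    (hW : W = derivative p * q - p * derivative q)
    (z₀ : ℂ) (hz₀ : z₀ ≠ 0) (hz₀1 : ‖z₀‖ ≠ 1)
    (m : ℕ) (hm : W.rootMultiplicity z₀ = m) :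
    W.rootMultiplicity (1 / (starRingEnd ℂ) z₀) = m := by
  classical
  have hconjinj : Function.Injective (starRingEnd ℂ) := (starRingEnd ℂ).injective
  have conj2 : (starRingEnd ℂ).comp (starRingEnd ℂ) = RingHom.id ℂ := by
    ext x; simp
  set pb : ℂ[X] := p.map (starRingEnd ℂ) with hpb
  have hq' : q = reflect (n + 1) pb := by
    rw [hq]; ext k
    rw [coeff_reflect, coeff_map]
    rw [finset_sum_coeff]
    simp_rw [coeff_C_mul, coeff_X_pow, mul_ite, mul_one, mul_zero]
    rw [Finset.sum_ite_eq (range (n + 2)) k]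
    by_cases hk : k ≤ n + 1
    · rw [if_pos (by simp; omega), revAt_le hk]
    · rw [if_neg (by simp; omega), revAt_eq_self' (by omega)]
      rw [coeff_eq_zero_of_natDegree_lt (by omega), map_zero]
  have hdpb : pb.natDegree = n + 1 := by
    rw [hpb, natDegree_map_eq_of_injective hconjinj, hdeg]
  set r : ℂ[X] := reflect (n + 1) p with hr
  have hdr : r.natDegree ≤ n + 1 := natDegree_reflect_le' hdeg.le
  have hdq : q.natDegree ≤ n + 1 := hq' ▸ natDegree_reflect_le' hdpb.le
  have hp_eq : p = reflect (n + 1) r := (reflect_reflect' _ _).symm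
  have hqb : q.map (starRingEnd ℂ) = r := by
    rw [hq', hpb, reflect_map, Polynomial.map_map, conj2, Polynomial.map_id, ← hr]
  have hdp' : (derivative p).natDegree ≤ n := by
    have := natDegree_derivative_le p; omega
  have hdq' : (derivative q).natDegree ≤ n := by
    have := natDegree_derivative_le q; omega
  have hA : reflect n (derivative p) = C ((n : ℂ) + 1) * r - X * derivative r := by
    conv_lhs => rw [hp_eq]
    rw [derivative_reflect' n r hdr, reflect_reflect']
  have hB : reflect n (derivative q) = C ((n : ℂ) + 1) * pb - X * derivative pb := by
    conv_lhs => rw [hq']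
    rw [derivative_reflect' n pb hdpb.le, reflect_reflect']
  have hrefq : reflect (n + 1) q = pb := by rw [hq', reflect_reflect']
  have hmapW : W.map (starRingEnd ℂ) = derivative pb * r - pb * derivative r := by
    rw [hW, Polynomial.map_sub, Polynomial.map_mul, Polynomial.map_mul,
      ← derivative_map, ← derivative_map, hqb, ← hpb]
  have hsym : reflect (2 * n + 1) W = X * W.map (starRingEnd ℂ) := by
    have e1 : reflect (2 * n + 1) (derivative p * q) =
        (C ((n : ℂ) + 1) * r - X * derivative r) * pb := by
      rw [show 2 * n + 1 = n + (n + 1) by ring,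
        reflect_mul _ _ hdp' hdq, hA, hrefq]
    have e2 : reflect (2 * n + 1) (p * derivative q) =
        r * (C ((n : ℂ) + 1) * pb - X * derivative pb) := by
      rw [show 2 * n + 1 = (n + 1) + n by ring,
        reflect_mul _ _ hdeg.le hdq', hB, ← hr]
    rw [hmapW, hW, reflect_sub, e1, e2]
    ring
  have hp'0 : derivative p ≠ 0 := by
    intro h
    have := natDegree_eq_zero_of_derivative_eq_zero h
    omega
  have hW0 : W ≠ 0 := by
    intro h0
    have h1 : derivative p * q = p * derivative q := by
      have h2 := hW
      rw [h0, eq_comm, sub_eq_zero] at h2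
      exact h2
    have h2 : p ∣ derivative p * q := h1 ▸ dvd_mul_right p (derivative q)
    have h3 : p ∣ derivative p := hcop.dvd_of_dvd_mul_right h2
    have h4 := natDegree_le_of_dvd h3 hp'0
    have h5 := natDegree_derivative_le p
    omega
  have hdW1 : W.natDegree ≤ 2 * n + 1 := by
    rw [hW]
    apply le_trans (natDegree_sub_le _ _)
    apply max_le
    · exact le_trans natDegree_mul_le (by omega)
    · exact le_trans natDegree_mul_le (by omega)
  have hcW : W.coeff (2 * n + 1) = 0 := by
    have h0 := congrArg (fun P : ℂ[X] => P.coeff 0) hsym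
    simp only [coeff_reflect, mul_coeff_zero, coeff_X_zero, zero_mul] at h0
    rwa [revAt_zero] at h0
  have hdW : W.natDegree ≤ 2 * n := by
    rw [natDegree_le_iff_coeff_eq_zero]
    intro k hk
    rcases eq_or_lt_of_le (show 2 * n + 1 ≤ k by omega) with h | h
    · rw [← h]; exact hcW
    · exact coeff_eq_zero_of_natDegree_lt (by omega)
  have hWm0 : W.map (starRingEnd ℂ) ≠ 0 := by
    rwa [Ne, Polynomial.map_eq_zero_iff hconjinj]
  have hXW0 : X * W.map (starRingEnd ℂ) ≠ 0 := mul_ne_zero X_ne_zero hWm0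
  have hdXW : (X * W.map (starRingEnd ℂ)).natDegree ≤ 2 * n + 1 := by
    apply le_trans natDegree_mul_le
    rw [natDegree_X, natDegree_map_eq_of_injective hconjinj]
    omega
  have hWeq : W = reflect (2 * n + 1) (X * W.map (starRingEnd ℂ)) := by
    rw [← hsym, reflect_reflect']
  have hz₀c : (starRingEnd ℂ) z₀ ≠ 0 := by simpa using hz₀
  have hkey := rootMultiplicity_reflect' (2 * n + 1) (X * W.map (starRingEnd ℂ))
    hXW0 hdXW (((starRingEnd ℂ) z₀)⁻¹) (inv_ne_zero hz₀c)
  rw [← hWeq, inv_inv] at hkey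
  rw [one_div, hkey, rootMultiplicity_mul hXW0,
    rootMultiplicity_eq_zero (by simp [IsRoot, hz₀c]), zero_add,
    ← eq_rootMultiplicity_map hconjinj, hm]
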